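/- arXiv:1409.5162 — 3 statements merged into one kernel-verified Lean document; each statement's English description precedes it below -/
import Mathlib

section
/- Let U ≤ N be positive integers, let 0 < κ ≤ π, and let φ_1, …, φ_U be independent real-valued random variables on a probability space, each with law absolutely continuous with respect to Lebesgue measure. Let A(ω) ∈ ℂ^{N×U} be the random matrix whose u-th column is the ULA steering vector a_N(κ sin φ_u(ω)). Then, almost surely, the matrix A(ω)ᴴA(ω) is Hermitian positive definite. -/
open Matrix Complex MeasureTheory ProbabilityTheory
open scoped ComplexOrder

/-- The ULA steering vector `a_N(θ) ∈ ℂ^N`, with `(a_N(θ))_k = (1/√N) e^{i k θ}`. -/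
noncomputable def steer (N : ℕ) (θ : ℝ) : Fin N → ℂ :=
  fun k => ((1 / Real.sqrt N : ℝ) : ℂ) * Complex.exp (Complex.I * ((k : ℕ) : ℂ) * (θ : ℂ))

/-- The fibers of `Real.sin` are countable. -/
lemma sin_fiber_countable (s : ℝ) : {t : ℝ | Real.sin t = s}.Countable := by
  rcases Set.eq_empty_or_nonempty {t : ℝ | Real.sin t = s} with h | ⟨t0, ht0⟩
  · simp [h]
  · have ht0' : Real.sin t0 = s := ht0
    have hsub : {t : ℝ | Real.sin t = s} ⊆
        (Set.range fun k : ℤ => t0 - 2 * k * Real.pi) ∪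
        (Set.range fun k : ℤ => (2 * k + 1) * Real.pi - t0) := by
      intro t ht
      have : Real.sin t = Real.sin t0 := by rw [ht0']; exact ht
      rcases Real.sin_eq_sin_iff.mp this with ⟨k, hk | hk⟩
      · left; refine ⟨k, ?_⟩; show t0 - 2 * (k:ℝ) * Real.pi = t; linarith
      · right; refine ⟨k, ?_⟩; show (2 * (k:ℝ) + 1) * Real.pi - t0 = t; linarith
    exact Set.Countable.mono hsub
      ((Set.countable_range _).union (Set.countable_range _))

/-- The fibers of `t ↦ exp(i κ sin t)` are countable when `κ ≠ 0`. -/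
lemma exp_fiber_countable {κ : ℝ} (hκ : κ ≠ 0) (c : ℂ) :
    {t : ℝ | Complex.exp (Complex.I * ((κ * Real.sin t : ℝ) : ℂ)) = c}.Countable := by
  rcases Set.eq_empty_or_nonempty
    {t : ℝ | Complex.exp (Complex.I * ((κ * Real.sin t : ℝ) : ℂ)) = c} with h | ⟨t0, ht0⟩
  · exact h ▸ Set.countable_empty
  · have ht0' : Complex.exp (Complex.I * ((κ * Real.sin t0 : ℝ) : ℂ)) = c := ht0
    have hsub : {t : ℝ | Complex.exp (Complex.I * ((κ * Real.sin t : ℝ) : ℂ)) = c} ⊆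
        ⋃ n : ℤ, {t : ℝ | Real.sin t = Real.sin t0 + 2 * Real.pi * n / κ} := by
      intro t ht
      have heq : Complex.exp (Complex.I * ((κ * Real.sin t : ℝ) : ℂ))
          = Complex.exp (Complex.I * ((κ * Real.sin t0 : ℝ) : ℂ)) := by
        rw [ht0']; exact ht
      rcases Complex.exp_eq_exp_iff_exists_int.mp heq with ⟨n, hn⟩
      refine Set.mem_iUnion.mpr ⟨n, ?_⟩
      have hre : (κ * Real.sin t : ℝ) = (κ * Real.sin t0 : ℝ) + n * (2 * Real.pi) := by
        have h2 : Complex.I * ((κ * Real.sin t : ℝ) : ℂ)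
            = Complex.I * (((κ * Real.sin t0 : ℝ) : ℂ) + (n : ℂ) * (2 * Real.pi)) := by
          rw [hn]; ring
        have h3 := mul_left_cancel₀ Complex.I_ne_zero h2
        exact_mod_cast h3
      show Real.sin t = Real.sin t0 + 2 * Real.pi * n / κ
      field_simp at hre ⊢
      nlinarith [hre]
    exact Set.Countable.mono hsub
      (Set.countable_iUnion fun n => sin_fiber_countable _)

/-- Gram matrix of scaled Vandermonde-type columns at distinct nodes is positive definite. -/
lemma gram_posDef {N U : ℕ} (hUN : U ≤ N) {c : ℂ} (hc : c ≠ 0)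
    {x : Fin U → ℂ} (hx : Function.Injective x)
    {M : Matrix (Fin N) (Fin U) ℂ}
    (hM : ∀ k u, M k u = c * x u ^ (k : ℕ)) :
    (Mᴴ * M).PosDef := by
  refine .of_dotProduct_mulVec_pos (isHermitian_conjTranspose_mul_self _) fun v hv => ?_
  have key : M *ᵥ v ≠ 0 := by
    intro h
    apply hv
    have hz : ∀ j : Fin U, ∑ u, v u * x u ^ (j : ℕ) = 0 := by
      intro j
      have h0 : (M *ᵥ v) (Fin.castLE hUN j) = 0 := by rw [h]; rfl
      have h1 : ∑ u, c * x u ^ (j : ℕ) * v u = 0 := by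
        simpa [Matrix.mulVec, dotProduct, hM, Fin.coe_castLE] using h0
      have h2 : c * ∑ u, v u * x u ^ (j : ℕ) = 0 := by
        rw [Finset.mul_sum]; rw [← h1]; congr 1; ext u; ring
      exact (mul_eq_zero.mp h2).resolve_left hc
    exact Matrix.eq_zero_of_forall_pow_sum_mul_pow_eq_zero hx hz
  rw [← mulVec_mulVec, dotProduct_mulVec, vecMul_conjTranspose, star_star]
  exact dotProduct_star_self_pos_iff.mpr key

/-- For independent random angles with absolutely continuous law, the exp-values collide
with probability zero. -/
lemma pair_null {Ω : Type*} [MeasurableSpace Ω] (μ : Measure Ω) [IsProbabilityMeasure μ]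
    {κ : ℝ} (hκ : κ ≠ 0) {X Y : Ω → ℝ} (hX : Measurable X) (hY : Measurable Y)
    (hXY : IndepFun X Y μ) (hacY : μ.map Y ≪ volume) :
    μ {ω | Complex.exp (Complex.I * ((κ * Real.sin (X ω) : ℝ) : ℂ)) =
           Complex.exp (Complex.I * ((κ * Real.sin (Y ω) : ℝ) : ℂ))} = 0 := by
  set g : ℝ → ℂ := fun t => Complex.exp (Complex.I * ((κ * Real.sin t : ℝ) : ℂ)) with hgdef
  have hg : Measurable g := by
    apply Complex.measurable_exp.comp
    exact measurable_const.mul (Complex.measurable_ofReal.comp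
      (measurable_const.mul Real.measurable_sin))
  have hD : MeasurableSet {p : ℝ × ℝ | g p.1 = g p.2} :=
    measurableSet_eq_fun (hg.comp measurable_fst) (hg.comp measurable_snd)
  have hmap : μ.map (fun ω => (X ω, Y ω)) = (μ.map X).prod (μ.map Y) :=
    (indepFun_iff_map_prod_eq_prod_map_map hX.aemeasurable hY.aemeasurable).mp hXY
  have hXprob : IsProbabilityMeasure (μ.map X) := Measure.isProbabilityMeasure_map hX.aemeasurable
  have hYprob : IsProbabilityMeasure (μ.map Y) := Measure.isProbabilityMeasure_map hY.aemeasurable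
  have hpre : {ω | g (X ω) = g (Y ω)}
      = (fun ω => (X ω, Y ω)) ⁻¹' {p : ℝ × ℝ | g p.1 = g p.2} := rfl
  calc μ {ω | g (X ω) = g (Y ω)}
      = μ.map (fun ω => (X ω, Y ω)) {p : ℝ × ℝ | g p.1 = g p.2} := by
        rw [Measure.map_apply (hX.prodMk hY) hD, hpre]
    _ = (μ.map X).prod (μ.map Y) {p : ℝ × ℝ | g p.1 = g p.2} := by rw [hmap]
    _ = ∫⁻ x, (μ.map Y) (Prod.mk x ⁻¹' {p : ℝ × ℝ | g p.1 = g p.2}) ∂(μ.map X) :=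
        Measure.prod_apply hD
    _ = 0 := by
        rw [← lintegral_zero (μ := μ.map X)]
        apply lintegral_congr
        intro x
        have hset : Prod.mk x ⁻¹' {p : ℝ × ℝ | g p.1 = g p.2} = {y : ℝ | g y = g x} := by
          ext y; simp [eq_comm]
        rw [hset]
        exact hacY ((exp_fiber_countable hκ (g x)).measure_zero volume)

theorem stmt1 {Ω : Type*} [MeasurableSpace Ω] (μ : Measure Ω) [IsProbabilityMeasure μ]
    (N U : ℕ) (hN : 0 < N) (hU : 0 < U) (hUN : U ≤ N)
    (κ : ℝ) (hκ0 : 0 < κ) (hκπ : κ ≤ Real.pi)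
    (φ : Fin U → Ω → ℝ) (hφ : ∀ u, Measurable (φ u))
    (hindep : iIndepFun φ μ)
    (hac : ∀ u, μ.map (φ u) ≪ volume)
    (A : Ω → Matrix (Fin N) (Fin U) ℂ)
    (hA : ∀ ω k u, A ω k u = steer N (κ * Real.sin (φ u ω)) k) :
    ∀ᵐ ω ∂μ, ((A ω)ᴴ * (A ω)).PosDef := by
  set g : ℝ → ℂ := fun t => Complex.exp (Complex.I * ((κ * Real.sin t : ℝ) : ℂ)) with hgdef
  have hpair : ∀ u v : Fin U, u ≠ v → μ {ω | g (φ u ω) = g (φ v ω)} = 0 := fun u v huv =>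
    pair_null μ (ne_of_gt hκ0) (hφ u) (hφ v) (hindep.indepFun huv) (hac v)
  have hae : ∀ᵐ ω ∂μ, ∀ u : Fin U, ∀ v : Fin U, u ≠ v → g (φ u ω) ≠ g (φ v ω) := by
    rw [ae_all_iff]
    intro u
    rw [ae_all_iff]
    intro v
    rcases eq_or_ne u v with rfl | huv
    · exact Filter.Eventually.of_forall fun ω h => absurd rfl h
    · have hne : ∀ᵐ ω ∂μ, g (φ u ω) ≠ g (φ v ω) := by
        rw [ae_iff]
        simpa using hpair u v huv
      filter_upwards [hne] with ω hω _
      exact hω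
  filter_upwards [hae] with ω hω
  have hxinj : Function.Injective fun u => g (φ u ω) := by
    intro u v h
    by_contra hne
    exact hω u v hne h
  have hc : ((1 / Real.sqrt N : ℝ) : ℂ) ≠ 0 := by
    have hs : Real.sqrt N ≠ 0 := ne_of_gt (Real.sqrt_pos.mpr (by exact_mod_cast hN))
    simp [hs]
  refine gram_posDef hUN hc hxinj fun k u => ?_
  rw [hA, steer]
  simp only [hgdef]
  rw [← Complex.exp_nat_mul]
  congr 1
  ring
end

section
/- Let P be an n×n Hermitian positive definite complex matrix, and let λ_min > 0 and λ_max be its smallest and largest eigenvalues. Then every diagonal entry of P, P_{uu}, is a positive real number, and for each index u, the diagonal entry of the inverse satisfies (P^{-1})_{uu} ≤ (1/(4 P_{uu})) · (λ_max/λ_min + λ_min/λ_max + 2). -/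
open Matrix
open scoped ComplexOrder

theorem stmt2 (n : ℕ) (P : Matrix (Fin n) (Fin n) ℂ) (hP : P.PosDef)
    (lmin lmax : ℝ)
    (hmin : IsLeast (Set.range hP.1.eigenvalues) lmin)
    (hmax : IsGreatest (Set.range hP.1.eigenvalues) lmax)
    (hlmin : 0 < lmin) :
    ∀ u : Fin n,
      (0 < (P u u).re ∧ (P u u).im = 0) ∧
      ((P⁻¹) u u).re ≤ (1 / (4 * (P u u).re)) * (lmax / lmin + lmin / lmax + 2) := by
  intro u
  have hH := hP.1
  have hlmax : 0 < lmax := lt_of_lt_of_le hlmin (hmin.2 hmax.1)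
  set ev := hH.eigenvalues with hev
  have hev_lb : ∀ i, lmin ≤ ev i := fun i => hmin.2 ⟨i, rfl⟩
  have hev_ub : ∀ i, ev i ≤ lmax := fun i => hmax.2 ⟨i, rfl⟩
  have hev_pos : ∀ i, 0 < ev i := fun i => lt_of_lt_of_le hlmin (hev_lb i)
  set U : Matrix (Fin n) (Fin n) ℂ := (hH.eigenvectorUnitary : Matrix (Fin n) (Fin n) ℂ) with hU
  have hUU : U * star U = 1 := (Matrix.mem_unitaryGroup_iff).mp hH.eigenvectorUnitary.2
  have hUU' : star U * U = 1 := (Matrix.mem_unitaryGroup_iff').mp hH.eigenvectorUnitary.2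
  have hspec : P = U * diagonal (fun i => (ev i : ℂ)) * star U := hH.spectral_theorem
  -- inverse of P
  have hPinv : P⁻¹ = U * diagonal (fun i => ((ev i)⁻¹ : ℂ)) * star U := by
    refine (Matrix.inv_eq_right_inv ?_)
    rw [hspec]
    calc U * diagonal (fun i => (ev i : ℂ)) * star U *
          (U * diagonal (fun i => ((ev i)⁻¹ : ℂ)) * star U)
        = U * (diagonal (fun i => (ev i : ℂ)) * (star U * U) *
            diagonal (fun i => ((ev i)⁻¹ : ℂ))) * star U := by
          noncomm_ring
      _ = 1 := by
          rw [hUU', mul_one, diagonal_mul_diagonal]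
          have : (fun i => (ev i : ℂ) * ((ev i)⁻¹ : ℂ)) = fun _ => (1 : ℂ) := by
            funext i
            rw [mul_inv_cancel₀]
            exact_mod_cast (hev_pos i).ne'
          rw [this, diagonal_one, mul_one, hUU]
  -- the key PSD matrix
  set s : ℝ := (lmin + lmax) / (lmin * lmax) with hs
  set t : ℝ := 1 / (lmin * lmax) with ht
  set f : Fin n → ℝ := fun i => s - (ev i)⁻¹ - t * ev i with hf
  have hfnn : ∀ i, (0 : ℝ) ≤ f i := by
    intro i
    have h1 := hev_lb i
    have h2 := hev_ub i
    have h3 := hev_pos i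
    have heq : f i = (ev i - lmin) * (lmax - ev i) / (lmin * lmax * ev i) := by
      simp only [hf, hs, ht]
      field_simp
      ring
    rw [heq]
    apply div_nonneg (by nlinarith) (by positivity)
  have hMpsd : (U * diagonal (fun i => ((f i : ℂ))) * star U).PosSemidef := by
    refine (Matrix.PosSemidef.diagonal ?_).mul_mul_conjTranspose_same U
    intro i
    simpa using Complex.zero_le_real.mpr (hfnn i)
  -- rewrite the PSD matrix
  have hMeq : U * diagonal (fun i => ((f i : ℂ))) * star U
      = (s : ℂ) • 1 - P⁻¹ - (t : ℂ) • P := by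
    have hdiag : diagonal (fun i => ((f i : ℂ)))
        = (s : ℂ) • 1 - diagonal (fun i => ((ev i)⁻¹ : ℂ))
          - (t : ℂ) • diagonal (fun i => (ev i : ℂ)) := by
      ext i j
      rcases eq_or_ne i j with rfl | h
      · simp only [Matrix.diagonal_apply_eq, Matrix.sub_apply, Matrix.smul_apply,
          Matrix.one_apply_eq, smul_eq_mul, mul_one, hf]
        push_cast
        ring
      · simp [Matrix.diagonal_apply_ne _ h, Matrix.one_apply_ne h]
    rw [hdiag, hPinv, hspec]
    simp only [Matrix.mul_sub, Matrix.sub_mul, Matrix.mul_smul, Matrix.smul_mul, Matrix.mul_one]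
    rw [hUU]
  -- diagonal entry positivity of P
  have hsingle : (Pi.single u 1 : Fin n → ℂ) ≠ 0 := by
    intro h
    have := congrFun h u
    simp at this
  have hdot : ∀ (A : Matrix (Fin n) (Fin n) ℂ),
      star (Pi.single u 1 : Fin n → ℂ) ⬝ᵥ (A *ᵥ Pi.single u 1) = A u u := by
    intro A
    simp [dotProduct, mulVec, Pi.single_apply, apply_ite (star : ℂ → ℂ)]
  have hPuu : (0 : ℂ) < P u u := by
    have := hP.dotProduct_mulVec_pos hsingle
    rwa [hdot P] at this
  have hPuu' : 0 < (P u u).re ∧ (P u u).im = 0 := by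
    rw [Complex.lt_def] at hPuu
    exact ⟨by simpa using hPuu.1, by simpa using hPuu.2.symm⟩
  refine ⟨hPuu', ?_⟩
  -- nonnegativity of diagonal entry of M
  have hMuu : (0 : ℂ) ≤ ((s : ℂ) • (1 : Matrix (Fin n) (Fin n) ℂ) - P⁻¹ - (t : ℂ) • P) u u := by
    have := hMpsd.dotProduct_mulVec_nonneg (Pi.single u 1)
    rwa [hdot, hMeq] at this
  have hre : 0 ≤ s - (P⁻¹ u u).re - t * (P u u).re := by
    rw [Complex.le_def] at hMuu
    have h1 := hMuu.1
    simpa [Matrix.sub_apply, Matrix.smul_apply, Matrix.one_apply, Complex.sub_re,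
      Complex.mul_re] using h1
  -- final arithmetic
  have hp : 0 < (P u u).re := hPuu'.1
  set p := (P u u).re
  have key : s - t * p ≤ (1 / (4 * p)) * (lmax / lmin + lmin / lmax + 2) := by
    rw [hs, ht, ← sub_nonneg]
    have e : 1 / (4 * p) * (lmax / lmin + lmin / lmax + 2)
        - ((lmin + lmax) / (lmin * lmax) - 1 / (lmin * lmax) * p)
        = (lmin + lmax - 2 * p) ^ 2 / (4 * p * (lmin * lmax)) := by
      field_simp
      ring
    rw [e]
    positivity
  linarith
end

section
/- Let A ∈ ℂ^{N×U} have full column rank and unit-norm columns, so that P = AᴴA is Hermitian positive definite with all diagonal entries equal to 1. Let σ_max² and σ_min² denote the largest and smallest eigenvalues of P (the squared largest and smallest singular values of A). Then for every real c ≥ 0 and every index u, log₂(1 + c / (P^{-1})_{uu}) ≥ log₂(1 + 4c · (σ_max²/σ_min² + σ_min²/σ_max² + 2)^{-1}). -/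
open Matrix
open scoped ComplexOrder

theorem stmt4 (N U : ℕ) (A : Matrix (Fin N) (Fin U) ℂ)
    (hA : LinearIndependent ℂ Aᵀ)
    (hcols : ∀ u, (Aᴴ * A) u u = 1)
    (smax smin : ℝ)
    (hmax : IsGreatest
      (Set.range (Matrix.isHermitian_conjTranspose_mul_self A).eigenvalues) smax)
    (hmin : IsLeast
      (Set.range (Matrix.isHermitian_conjTranspose_mul_self A).eigenvalues) smin) :
    ∀ (c : ℝ), 0 ≤ c → ∀ u : Fin U,
      Real.logb 2 (1 + 4 * c * (smax / smin + smin / smax + 2)⁻¹) ≤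
        Real.logb 2 (1 + c / (((Aᴴ * A)⁻¹) u u).re) := by
  set P := Aᴴ * A with hPdef
  have hP : P.IsHermitian := Matrix.isHermitian_conjTranspose_mul_self A
  -- A *ᵥ x = 0 → x = 0
  have hinj : ∀ x : Fin U → ℂ, A *ᵥ x = 0 → x = 0 := by
    intro x hx
    have h := Fintype.linearIndependent_iff.mp hA x ?_
    · funext u; exact h u
    · funext i
      have := congrFun hx i
      simpa [Matrix.mulVec, dotProduct, mul_comm] using this
  -- P is positive definite
  have hPD : P.PosDef := by
    refine Matrix.posDef_iff_dotProduct_mulVec.mpr ⟨hP, fun x hx => ?_⟩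
    rw [hPdef, ← mulVec_mulVec, dotProduct_mulVec, vecMul_conjTranspose, star_star]
    refine Matrix.dotProduct_star_self_pos_iff.mpr ?_
    intro h
    exact hx (hinj x h)
  have hlampos : ∀ i, 0 < hP.eigenvalues i := hPD.eigenvalues_pos
  obtain ⟨imin, himin⟩ := hmin.1
  obtain ⟨imax, himax⟩ := hmax.1
  have hm : 0 < smin := himin ▸ hlampos imin
  have hM : 0 < smax := himax ▸ hlampos imax
  have hmM : smin ≤ smax := hmin.2 hmax.1
  have hlb : ∀ i, smin ≤ hP.eigenvalues i := fun i => hmin.2 ⟨i, rfl⟩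
  have hub : ∀ i, hP.eigenvalues i ≤ smax := fun i => hmax.2 ⟨i, rfl⟩
  -- spectral decomposition
  set V : Matrix (Fin U) (Fin U) ℂ := (hP.eigenvectorUnitary : Matrix (Fin U) (Fin U) ℂ) with hV
  have hVV : V * star V = 1 := Matrix.mem_unitaryGroup_iff.mp hP.eigenvectorUnitary.2
  have hVV' : star V * V = 1 := Matrix.mem_unitaryGroup_iff'.mp hP.eigenvectorUnitary.2
  have hspec : P = V * diagonal (RCLike.ofReal ∘ hP.eigenvalues) * star V := hP.spectral_theorem
  -- explicit inverse
  set Q : Matrix (Fin U) (Fin U) ℂ :=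
    V * diagonal (fun i => ((hP.eigenvalues i)⁻¹ : ℂ)) * star V with hQ
  have hPQ : P * Q = 1 := by
    rw [hspec, hQ]
    have : (diagonal (RCLike.ofReal ∘ hP.eigenvalues) : Matrix (Fin U) (Fin U) ℂ) *
        diagonal (fun i => ((hP.eigenvalues i)⁻¹ : ℂ)) = 1 := by
      rw [diagonal_mul_diagonal]
      have heq : (fun i => (RCLike.ofReal ∘ hP.eigenvalues) i * ((hP.eigenvalues i : ℂ))⁻¹)
          = fun _ : Fin U => (1 : ℂ) := by
        funext i
        have hne : ((hP.eigenvalues i : ℝ) : ℂ) ≠ 0 := by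
          exact_mod_cast (hlampos i).ne'
        simp only [Function.comp_apply]
        exact mul_inv_cancel₀ hne
      rw [heq, diagonal_one]
    calc V * diagonal (RCLike.ofReal ∘ hP.eigenvalues) * star V *
          (V * diagonal (fun i => ((hP.eigenvalues i)⁻¹ : ℂ)) * star V)
        = V * diagonal (RCLike.ofReal ∘ hP.eigenvalues) * (star V * V) *
          diagonal (fun i => ((hP.eigenvalues i)⁻¹ : ℂ)) * star V := by
          noncomm_ring
      _ = V * ((diagonal (RCLike.ofReal ∘ hP.eigenvalues)) *
          diagonal (fun i => ((hP.eigenvalues i)⁻¹ : ℂ))) * star V := by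
          rw [hVV']; noncomm_ring
      _ = 1 := by rw [this, mul_one, hVV]
  have hPinv : P⁻¹ = Q := Matrix.inv_eq_right_inv hPQ
  -- weights
  intro c hc u
  set w : Fin U → ℝ := fun i => Complex.normSq (V u i) with hw
  have hw0 : ∀ i, 0 ≤ w i := fun i => Complex.normSq_nonneg _
  have entry : ∀ d : Fin U → ℝ, ((V * diagonal (fun i => ((d i : ℝ) : ℂ)) * star V) u u).re
      = ∑ i, w i * d i := by
    intro d
    rw [Matrix.mul_apply]
    rw [Complex.re_sum]
    refine Finset.sum_congr rfl fun i _ => ?_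
    rw [Matrix.mul_diagonal, Matrix.star_apply]
    have : V u i * (d i : ℂ) * star (V u i) = ((w i * d i : ℝ) : ℂ) := by
      rw [mul_right_comm]
      rw [show V u i * star (V u i) = ((w i : ℝ) : ℂ) from by
        rw [hw]; exact (Complex.mul_conj (V u i))]
      push_cast; ring
    rw [this, Complex.ofReal_re]
  -- sum of weights = 1
  have S1 : ∑ i, w i = 1 := by
    have h1 := entry (fun _ => (1 : ℝ))
    simp only [Complex.ofReal_one] at h1
    rw [show (diagonal fun _ : Fin U => (1 : ℂ)) = (1 : Matrix (Fin U) (Fin U) ℂ) from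
      diagonal_one, mul_one, hVV] at h1
    simp only [Matrix.one_apply_eq, Complex.one_re, mul_one] at h1
    linarith [h1]
  -- sum w * λ = 1
  have S2 : ∑ i, w i * hP.eigenvalues i = 1 := by
    have h1 := entry hP.eigenvalues
    have : (diagonal (fun i => ((hP.eigenvalues i : ℝ) : ℂ)) : Matrix (Fin U) (Fin U) ℂ)
        = diagonal (RCLike.ofReal ∘ hP.eigenvalues) := rfl
    rw [this, ← hspec] at h1
    rw [← h1, hcols u, Complex.one_re]
  -- diagonal of inverse
  have Dval : ((P⁻¹) u u).re = ∑ i, w i * (hP.eigenvalues i)⁻¹ := by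
    rw [hPinv, hQ]
    have h1 := entry (fun i => (hP.eigenvalues i)⁻¹)
    simp only [Complex.ofReal_inv] at h1
    exact h1
  set d : ℝ := ∑ i, w i * (hP.eigenvalues i)⁻¹ with hd
  -- d is positive
  have hdpos : 0 < d := by
    obtain ⟨i, _, hi⟩ := Finset.exists_ne_zero_of_sum_ne_zero (by rw [S2]; norm_num :
      ∑ i, w i * hP.eigenvalues i ≠ 0)
    refine Finset.sum_pos' (fun j _ => mul_nonneg (hw0 j) (inv_nonneg.mpr (hlampos j).le))
      ⟨i, Finset.mem_univ i, ?_⟩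
    have hwi : 0 < w i := lt_of_le_of_ne (hw0 i) (by
      intro h; exact hi (by rw [← h]; ring))
    exact mul_pos hwi (inv_pos.mpr (hlampos i))
  -- Kantorovich-type bound: d ≤ (smin + smax - 1)/(smin * smax)
  have hbound : d ≤ (smin + smax - 1) / (smin * smax) := by
    have step : ∀ i, w i * (hP.eigenvalues i)⁻¹
        ≤ w i * ((smin + smax - hP.eigenvalues i) / (smin * smax)) := by
      intro i
      refine mul_le_mul_of_nonneg_left ?_ (hw0 i)
      rw [inv_eq_one_div, div_le_div_iff₀ (hlampos i) (mul_pos hm hM)]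
      nlinarith [mul_nonneg (sub_nonneg.mpr (hlb i)) (sub_nonneg.mpr (hub i))]
    calc d ≤ ∑ i, w i * ((smin + smax - hP.eigenvalues i) / (smin * smax)) :=
          Finset.sum_le_sum fun i _ => step i
      _ = ((smin + smax) * (∑ i, w i) - ∑ i, w i * hP.eigenvalues i) / (smin * smax) := by
          rw [Finset.mul_sum, ← Finset.sum_sub_distrib, Finset.sum_div]
          refine Finset.sum_congr rfl fun i _ => ?_
          ring
      _ = (smin + smax - 1) / (smin * smax) := by rw [S1, S2, mul_one]
  have hd4 : d ≤ (smin + smax)^2 / (4 * (smin * smax)) := by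
    refine hbound.trans ?_
    rw [div_le_div_iff₀ (mul_pos hm hM) (by positivity)]
    nlinarith [mul_nonneg (mul_pos hm hM).le (sq_nonneg (smin + smax - 2))]
  -- now the final inequality
  set t : ℝ := smax / smin + smin / smax + 2 with ht
  have htval : t = (smin + smax)^2 / (smin * smax) := by
    rw [ht]; field_simp; ring
  have htpos : 0 < t := by rw [htval]; positivity
  have hdt : d ≤ t / 4 := by
    rw [htval, div_div, mul_comm (smin * smax) 4]
    exact hd4
  have key : 4 * c * t⁻¹ ≤ c / d := by
    have h4 : 4 * t⁻¹ ≤ d⁻¹ := by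
      have h := inv_anti₀ hdpos hdt
      rwa [inv_div, div_eq_mul_inv] at h
    calc 4 * c * t⁻¹ = c * (4 * t⁻¹) := by ring
      _ ≤ c * d⁻¹ := mul_le_mul_of_nonneg_left h4 hc
      _ = c / d := by rw [div_eq_mul_inv]
  rw [Dval]
  refine Real.logb_le_logb_of_le one_lt_two ?_ ?_
  · have : 0 ≤ 4 * c * t⁻¹ := by positivity
    linarith
  · linarith [key]
end
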